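/- arXiv:2004.09671 — 4 statements merged into one kernel-verified Lean document; each statement's English description precedes it below -/
import Mathlib

section
/- Let M and A be abelian groups viewed as ℤ-modules, let α ∈ M, and let α̌ : M → ℤ be a ℤ-linear functional with α̌(α) = 2. Let q : M → A be a quadratic map that is invariant under the reflection s_α, i.e. q(λ − α̌(λ) • α) = q(λ) for all λ ∈ M. If moreover α = 2 • β for some β ∈ M (the coroot is twice a cocharacter), then the restricted condition holds automatically: κ(α, λ) = α̌(λ) • q(α) for all λ ∈ M, where κ denotes the polar form of q. -/
/-- If a quadratic map `q : M → A` is invariant under the reflection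
`s_α(λ) = λ - α̌(λ) • α` attached to `α ∈ M` and `α̌ : M →ₗ[ℤ] ℤ` with `α̌(α) = 2`,
and if moreover `α = 2 • β` for some `β ∈ M`, then the restricted condition
`κ(α, λ) = α̌(λ) • q(α)` holds automatically, where `κ` is the polar form of `q`. -/
theorem polar_eq_of_reflection_invariant_of_coroot_even
    (M A : Type*) [AddCommGroup M] [Module ℤ M] [AddCommGroup A] [Module ℤ A]
    (α : M) (αv : M →ₗ[ℤ] ℤ) (hα : αv α = 2)
    (q : QuadraticMap ℤ M A)
    (hW : ∀ lam : M, q (lam - αv lam • α) = q lam)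
    (β : M) (hβ : α = (2 : ℤ) • β) :
    ∀ lam : M, QuadraticMap.polar q α lam = αv lam • q α := by
  -- conversion between the module smul and the zsmul on `M` and `A`
  have convM := fun (n : ℤ) (x : M) => Int.cast_smul_eq_zsmul ℤ n x
  have convA := fun (n : ℤ) (x : A) => Int.cast_smul_eq_zsmul ℤ n x
  simp only [Int.cast_id] at convM convA
  -- `q (n • x) = (n * n) • q x`, in zsmul form
  have qsmul : ∀ (n : ℤ) (x : M), q (n • x) = (n * n) • q x := by
    intro n x
    have h := QuadraticMap.map_smul (Q := q) n x
    simp only [convM, convA] at h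
    exact h
  -- `polar q x (n • y) = n • polar q x y`, in zsmul form
  have psmul : ∀ (n : ℤ) (x y : M),
      QuadraticMap.polar q x (n • y) = n • QuadraticMap.polar q x y := by
    intro n x y
    have h := QuadraticMap.polar_smul_right (Q := q) n x y
    simp only [convM, convA] at h
    exact h
  -- key identity : n • κ(α, λ) = n² • q α with n = αv λ
  have key : ∀ lam : M, (αv lam) • QuadraticMap.polar q α lam
      = (αv lam * αv lam) • q α := by
    intro lam
    set n := αv lam with hn
    have h := hW lam
    rw [sub_eq_add_neg, ← neg_zsmul] at h
    have hpol : QuadraticMap.polar q lam ((-n) • α)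
        = q (lam + (-n) • α) - q lam - q ((-n) • α) := rfl
    have hP : (-n) • QuadraticMap.polar q lam α = -(((-n) * (-n)) • q α) := by
      rw [← psmul, hpol, h, qsmul]; abel
    calc n • QuadraticMap.polar q α lam
        = n • QuadraticMap.polar q lam α := by rw [QuadraticMap.polar_comm]
      _ = -((-n) • QuadraticMap.polar q lam α) := by rw [neg_zsmul, neg_neg]
      _ = -(-(((-n) * (-n)) • q α)) := by rw [hP]
      _ = (n * n) • q α := by rw [neg_neg]; congr 1; ring
  -- `αv β = 1`
  have hβv : αv β = 1 := by
    have h := hα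
    rw [hβ, two_zsmul, map_add] at h
    omega
  have hqβ : QuadraticMap.polar q α β = q α := by
    have h := key β
    rw [hβv, one_zsmul, one_mul, one_zsmul] at h
    exact h
  intro lam
  set n := αv lam with hn
  have h1 := key lam
  have h2 := key (lam + β)
  rw [map_add, hβv, QuadraticMap.polar_add_right, hqβ, ← hn] at h2
  -- expand h2 and combine
  set k := QuadraticMap.polar q α lam with hk
  set a := q α with ha
  have e2 : (n + 1) • (k + a) = (n * n) • a + k + (n + 1) • a := by
    rw [← hn] at h1
    rw [zsmul_add, add_zsmul, one_zsmul, h1]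
  have e3 : ((n + 1) * (n + 1)) • a = (n * n) • a + (n + 1) • a + n • a := by
    have : (n + 1) * (n + 1) = n * n + (n + 1) + n := by ring
    rw [this, add_zsmul, add_zsmul]
  rw [e2, e3] at h2
  calc k = ((n * n) • a + k + (n + 1) • a) - ((n * n) • a + (n + 1) • a) := by abel
    _ = ((n * n) • a + (n + 1) • a + n • a) - ((n * n) • a + (n + 1) • a) := by rw [h2]
    _ = n • a := by abel
end

section
/- Let M and A be abelian groups viewed as ℤ-modules, let (α_i)_{i ∈ ι} be a family of elements of M together with ℤ-linear functionals α̌_i : M → ℤ satisfying α̌_i(α_i) = 2, and let q : M → A be a quadratic map satisfying the restricted condition κ(α_i, λ) = α̌_i(λ) • q(α_i) for all i ∈ ι and λ ∈ M, where κ is the polar form of q. If q(α_i) = 0 for all i ∈ ι, then for every element μ of the subgroup of M generated by the α_i and every λ ∈ M one has κ(μ, λ) = 0, q(μ) = 0, and q(λ + μ) = q(λ); in other words, the subgroup generated by the α_i lies in the kernel of the polar form and q is invariant under translation by it (so q descends to the quotient). -/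
/-- Let `(α_i)` be a family of elements of `M` with linear functionals `α̌_i` satisfying
`α̌_i(α_i) = 2`, and let `q : M → A` be a quadratic map satisfying the restricted condition
`κ(α_i, λ) = α̌_i(λ) • q(α_i)`.  If `q(α_i) = 0` for all `i`, then the subgroup generated by
the `α_i` lies in the kernel of the polar form `κ` and `q` is invariant under translation by
it, so `q` descends to the quotient. -/
theorem quadraticMap_descends_of_vanishing_on_coroots
    (M A : Type*) [AddCommGroup M] [Module ℤ M] [AddCommGroup A] [Module ℤ A]
    (ι : Type*) (α : ι → M) (αv : ι → (M →ₗ[ℤ] ℤ))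
    (hα : ∀ i, αv i (α i) = 2)
    (q : QuadraticMap ℤ M A)
    (hrestr : ∀ i, ∀ lam : M, QuadraticMap.polar q (α i) lam = αv i lam • q (α i))
    (hzero : ∀ i, q (α i) = 0) :
    ∀ μ ∈ AddSubgroup.closure (Set.range α), ∀ lam : M,
      QuadraticMap.polar q μ lam = 0 ∧ q μ = 0 ∧ q (lam + μ) = q lam := by
  have key : ∀ μ ∈ AddSubgroup.closure (Set.range α),
      (∀ lam : M, QuadraticMap.polar q μ lam = 0) ∧ q μ = 0 := by
    intro μ hμ
    induction hμ using AddSubgroup.closure_induction with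
    | mem x hx =>
      obtain ⟨i, rfl⟩ := hx
      refine ⟨fun lam => ?_, hzero i⟩
      rw [hrestr i lam, hzero i, zsmul_zero]
    | zero => exact ⟨fun lam => QuadraticMap.polar_zero_left q lam, q.map_zero⟩
    | add x y hx hy ihx ihy =>
      refine ⟨fun lam => ?_, ?_⟩
      · rw [QuadraticMap.polar_add_left, ihx.1, ihy.1, add_zero]
      · have := ihx.1 y
        rw [QuadraticMap.polar] at this
        rw [ihx.2, ihy.2, sub_zero, sub_zero] at this
        exact this
    | neg x hx ihx =>
      refine ⟨fun lam => ?_, ?_⟩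
      · rw [QuadraticMap.polar_neg_left, ihx.1, neg_zero]
      · simp [ihx.2]
  intro μ hμ lam
  obtain ⟨hpol, hq⟩ := key μ hμ
  refine ⟨hpol lam, hq, ?_⟩
  have := hpol lam
  rw [QuadraticMap.polar, hq, sub_zero, sub_eq_zero, add_comm] at this
  exact this
end

section
/- Let M be a free ℤ-module of finite rank and A any abelian group viewed as a ℤ-module. Then the canonical additive map Q(M; ℤ) ⊗_ℤ A → Q(M; A), sending a pure tensor q ⊗ a to the quadratic map λ ↦ q(λ) • a, is bijective. -/
open TensorProduct QuadraticMap

section QuadAux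

variable (M A : Type*) [AddCommGroup M] [Module ℤ M]
  [Module.Free ℤ M] [Module.Finite ℤ M] [AddCommGroup A]

/-- index type: diagonal plus strictly upper triangular entries -/
abbrev QKappa (n : ℕ) := Fin n ⊕ {p : Fin n × Fin n // p.1 < p.2}

noncomputable def quadPhi :
    QuadraticMap ℤ M A →ₗ[ℤ] (QKappa (Module.finrank ℤ M) → A) where
  toFun q := fun k =>
    match k with
    | .inl i => q (Module.finBasis ℤ M i)
    | .inr p => polar q (Module.finBasis ℤ M p.1.1) (Module.finBasis ℤ M p.1.2)
  map_add' q₁ q₂ := by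
    funext k
    cases k with
    | inl i => simp
    | inr p =>
      show polar (⇑q₁ + ⇑q₂) _ _ = _
      simp [polar_add]
  map_smul' c q := by
    funext k
    cases k with
    | inl i => simp
    | inr p =>
      show polar (c • ⇑q) _ _ = _
      simp [polar_smul]

theorem quadPhi_injective : Function.Injective (quadPhi M A) := by
  rw [injective_iff_map_eq_zero]
  intro q hq
  set b := Module.finBasis ℤ M with hb
  have h1 : ∀ i, q (b i) = 0 := fun i => congrFun hq (.inl i)
  have hpol : ∀ i j, polar q (b i) (b j) = 0 := by
    intro i j
    rcases lt_trichotomy i j with h | h | h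
    · exact congrFun hq (.inr ⟨(i, j), h⟩)
    · subst h
      rw [polar_self, two_smul, h1, add_zero]
    · rw [polar_comm]
      exact congrFun hq (.inr ⟨(j, i), h⟩)
  have hpol' : ∀ x y, polar q x y = 0 := by
    intro x y
    have : q.polarBilin = 0 := by
      apply b.ext; intro i
      apply b.ext; intro j
      simpa using hpol i j
    simpa using LinearMap.congr_fun (LinearMap.congr_fun this x) y
  have hadd : ∀ x y, q (x + y) = q x + q y := by
    intro x y
    have := hpol' x y
    rw [polar, sub_sub, sub_eq_zero] at this
    exact this
  ext x
  have hsum : ∀ (s : Finset (Fin (Module.finrank ℤ M))) (f : Fin (Module.finrank ℤ M) → M),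
      q (∑ i ∈ s, f i) = ∑ i ∈ s, q (f i) := by
    intro s f
    induction s using Finset.induction with
    | empty => simp
    | insert a s hnotmem ih => rw [Finset.sum_insert hnotmem,
        Finset.sum_insert hnotmem, hadd, ih]
  rw [← b.sum_repr x, hsum]
  simp [QuadraticMap.map_smul, h1]

theorem quadPhi_surjective : Function.Surjective (quadPhi M A) := by
  intro v
  set b := Module.finBasis ℤ M with hb
  set B : M →ₗ[ℤ] M →ₗ[ℤ] A :=
    b.constr ℤ (fun i => b.constr ℤ (fun j =>
      if h : i < j then v (.inr ⟨(i, j), h⟩) else if i = j then v (.inl i) else 0)) with hB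
  have hBapp : ∀ i j, B (b i) (b j) =
      if h : i < j then v (.inr ⟨(i, j), h⟩) else if i = j then v (.inl i) else 0 := by
    intro i j
    rw [hB, Module.Basis.constr_basis, Module.Basis.constr_basis]
  refine ⟨LinearMap.BilinMap.toQuadraticMap B, ?_⟩
  funext k
  cases k with
  | inl i =>
    show (LinearMap.BilinMap.toQuadraticMap B) (b i) = v (.inl i)
    rw [LinearMap.BilinMap.toQuadraticMap_apply, hBapp]
    simp
  | inr p =>
    obtain ⟨⟨i, j⟩, hij⟩ := p
    show polar (LinearMap.BilinMap.toQuadraticMap B) (b i) (b j) = _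
    rw [LinearMap.BilinMap.polar_toQuadraticMap, hBapp, hBapp]
    rw [dif_pos hij, dif_neg (asymm hij), if_neg hij.ne', add_zero]

end QuadAux

/-- The canonical additive map `Q(M; ℤ) ⊗_ℤ A → Q(M; A)`, sending a pure tensor `q ⊗ a`
to the quadratic map `λ ↦ q(λ) • a`. -/
noncomputable def quadraticMapTensorLift (M A : Type*) [AddCommGroup M] [Module ℤ M]
    [AddCommGroup A] :
    (QuadraticMap ℤ M ℤ) ⊗[ℤ] A →ₗ[ℤ] QuadraticMap ℤ M A :=
  TensorProduct.lift
    { toFun := fun q =>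
        { toFun := fun a => (LinearMap.toSpanSingleton ℤ A a).compQuadraticMap q
          map_add' := fun a b => by
            ext lam
            show q lam • (a + b) = q lam • a + q lam • b
            exact smul_add _ _ _
          map_smul' := fun c a => by
            ext lam
            show q lam • (c • a) = c • (q lam • a)
            exact smul_comm _ _ _
          }
      map_add' := fun q₁ q₂ => by
        ext a lam
        show (q₁ lam + q₂ lam) • a = q₁ lam • a + q₂ lam • a
        exact add_smul _ _ _
      map_smul' := fun c q => by
        ext a lam
        show (c • q lam) • a = c • (q lam • a)
        exact smul_assoc _ _ _ }

/-- For a free `ℤ`-module `M` of finite rank and any abelian group `A`, the canonical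
additive map `Q(M; ℤ) ⊗_ℤ A → Q(M; A)`, `q ⊗ a ↦ (λ ↦ q(λ) • a)`, is bijective. -/
theorem quadraticMapTensorLift_bijective (M A : Type*) [AddCommGroup M] [Module ℤ M]
    [Module.Free ℤ M] [Module.Finite ℤ M] [AddCommGroup A] :
    Function.Bijective (quadraticMapTensorLift M A) := by
  set n := Module.finrank ℤ M
  let e : ((QKappa n → ℤ) ⊗[ℤ] A) ≃ₗ[ℤ] (QKappa n → A) :=
    (TensorProduct.comm ℤ _ _).trans (TensorProduct.piScalarRight ℤ ℤ A (QKappa n))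
  have hcomm : (quadPhi M A) ∘ₗ quadraticMapTensorLift M A
      = e.toLinearMap ∘ₗ (LinearMap.rTensor A (quadPhi M ℤ)) := by
    apply TensorProduct.ext'
    intro q a
    funext k
    show quadPhi M A ((LinearMap.toSpanSingleton ℤ A a).compQuadraticMap q) k
      = e ((quadPhi M ℤ q) ⊗ₜ[ℤ] a)  k
    have hre : e ((quadPhi M ℤ q) ⊗ₜ[ℤ] a) k = (quadPhi M ℤ q k) • a := by
      rfl
    rw [hre]
    cases k with
    | inl i => rfl
    | inr p =>
      show polar ((LinearMap.toSpanSingleton ℤ A a).compQuadraticMap q) _ _ = _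
      simp only [polar, LinearMap.compQuadraticMap]
      show q _ • a - q _ • a - q _ • a = polar q _ _ • a
      simp [polar, sub_smul]
  have hΦℤ : Function.Bijective (quadPhi M ℤ) := ⟨quadPhi_injective M ℤ, quadPhi_surjective M ℤ⟩
  let eℤ := LinearEquiv.ofBijective _ hΦℤ
  have hrT : Function.Bijective (LinearMap.rTensor A (quadPhi M ℤ)) := by
    have : LinearMap.rTensor A (quadPhi M ℤ) = (LinearEquiv.rTensor A eℤ).toLinearMap := rfl
    rw [this]
    exact (LinearEquiv.rTensor A eℤ).bijective
  have hcompbij : Function.Bijective ((quadPhi M A) ∘ₗ quadraticMapTensorLift M A) := by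
    rw [hcomm]
    exact e.bijective.comp hrT
  constructor
  · intro x y hxy
    exact hcompbij.1 (by simp [LinearMap.comp_apply, hxy])
  · intro y
    obtain ⟨x, hx⟩ := hcompbij.2 (quadPhi M A y)
    exact ⟨x, quadPhi_injective M A hx⟩
end

section
/- Let M be a free ℤ-module of finite rank and A a divisible abelian group. Then the abelian group Q(M; A) of A-valued quadratic maps on M is divisible: for every quadratic map q : M → A and every positive integer n there exists a quadratic map q' : M → A with n • q' = q. In particular every A-valued quadratic form on M admits a 'half', a quadratic map q' with 2 • q' = q. -/
/-- For a free `ℤ`-module `M` and a divisible target `N`, the group of linear maps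
`M →ₗ[ℤ] N` is divisible. -/
lemma linearMap_divisible_of_divisible'
    (M N : Type*) [AddCommGroup M] [Module ℤ M] [Module.Free ℤ M]
    [AddCommGroup N] [Module ℤ N]
    (hN : ∀ (a : N) (n : ℕ), 0 < n → ∃ b : N, n • b = a)
    (f : M →ₗ[ℤ] N) (n : ℕ) (hn : 0 < n) : ∃ g : M →ₗ[ℤ] N, n • g = f := by
  obtain ⟨ι, b⟩ := Module.Free.exists_basis (R := ℤ) (M := M)
  have hc : ∀ i : ι, ∃ c : N, n • c = f (b i) := fun i => hN _ n hn
  choose c hc using hc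
  haveI := @smulCommClass_self ℤ N _ Module.toDistribMulAction.toMulAction
  refine ⟨b.constr ℤ c, b.ext fun i => ?_⟩
  simp only [LinearMap.smul_apply, Module.Basis.constr_basis]
  exact hc i

/-- For a lattice `M` and a divisible abelian group `A`, the group of `A`-valued
quadratic maps on `M` is divisible; in particular every `A`-valued quadratic form
admits a half. -/
theorem quadraticMap_divisible_of_divisible
    (M A : Type*) [AddCommGroup M] [Module ℤ M] [Module.Free ℤ M] [Module.Finite ℤ M]
    [AddCommGroup A] [Module ℤ A]
    (hA : ∀ (a : A) (n : ℕ), 0 < n → ∃ b : A, n • b = a) :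
    (∀ (q : QuadraticMap ℤ M A) (n : ℕ), 0 < n → ∃ q' : QuadraticMap ℤ M A, n • q' = q) ∧
    (∀ q : QuadraticMap ℤ M A, ∃ q' : QuadraticMap ℤ M A, 2 • q' = q) := by
  have main : ∀ (q : QuadraticMap ℤ M A) (n : ℕ), 0 < n →
      ∃ q' : QuadraticMap ℤ M A, n • q' = q := by
    intro q n hn
    obtain ⟨B, hB⟩ := LinearMap.BilinMap.toQuadraticMap_surjective q
    haveI := @smulCommClass_self ℤ A _ Module.toDistribMulAction.toMulAction
    obtain ⟨B', hB'⟩ :=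
      @linearMap_divisible_of_divisible' M (M →ₗ[ℤ] A) _ _ _ _ LinearMap.module
        (fun f n hn => linearMap_divisible_of_divisible' M A hA f n hn) B n hn
    refine ⟨LinearMap.BilinMap.toQuadraticMap B', ?_⟩
    rw [← hB, ← hB']
    ext x
    rfl
  exact ⟨main, fun q => main q 2 (by norm_num)⟩
end
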